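/- Correctness of the parametric trace slicing algorithm A: for any parametric trace τ, (1) the domain of A(τ).T equals A(τ).Θ, which equals Θ_τ; (2) A(τ).T(θ) = τ↾θ for every θ ∈ A(τ).Θ; and (3) for every parameter instance θ : X ⇀ V, τ↾θ = A(τ).T(max (θ]_{A(τ).Θ}). -/
import Mathlib


/- Partial functions X ⇀ V are modeled as functions `X → Option V`. -/

variable {X V E : Type*}

/-- `θ` is less informative than `θ'` (θ ⊑ θ'): wherever `θ` is defined, `θ'` is
defined with the same value. -/
def PFle (θ θ' : X → Option V) : Prop :=
  ∀ x v, θ x = some v → θ' x = some v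

/-- The everywhere-undefined partial function ⊥. -/
def pbot : X → Option V := fun _ => none

/-- `θ'` is an upper bound of the set `Θ` of partial functions. -/
def IsUB (Θ : Set (X → Option V)) (θ' : X → Option V) : Prop :=
  ∀ θ ∈ Θ, PFle θ θ'

/-- `θ'` is the least upper bound (⊔Θ) of the set `Θ` of partial functions. -/
def IsLubPF (Θ : Set (X → Option V)) (θ' : X → Option V) : Prop :=
  IsUB Θ θ' ∧ ∀ θ'', IsUB Θ θ'' → PFle θ' θ''

/-- Θ is lub closed: every subset of Θ admitting an upper bound has its lub in Θ. -/
def LubClosed (Θ : Set (X → Option V)) : Prop :=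
  ∀ Θ' ⊆ Θ, ∀ u, IsLubPF Θ' u → u ∈ Θ

/-- The lub closure of Θ: the intersection of all lub closed sets including Θ. -/
def lubClosure (Θ : Set (X → Option V)) : Set (X → Option V) :=
  ⋂₀ {Θ' | Θ ⊆ Θ' ∧ LubClosed Θ'}

/-- (θ]_Θ : the elements of Θ that are less informative than θ. -/
def below (θ : X → Option V) (Θ : Set (X → Option V)) : Set (X → Option V) :=
  {θ'' ∈ Θ | PFle θ'' θ}

/-- {θ} ⊔ Θ : the set of all existing lubs θ ⊔ θ'' with θ'' ∈ Θ. -/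
def joinOne (θ : X → Option V) (Θ : Set (X → Option V)) : Set (X → Option V) :=
  {θ' | ∃ θ'' ∈ Θ, IsLubPF {θ, θ''} θ'}

/-- max (θ]_Θ : the maximum element of (θ]_Θ (well defined when Θ is lub closed). -/
noncomputable def maxBelow (Θ : Set (X → Option V)) (θ : X → Option V) :
    X → Option V :=
  Classical.epsilon fun m => m ∈ below θ Θ ∧ ∀ q ∈ below θ Θ, PFle q m

/-- A parametric event is a pair e⟨θ⟩; a parametric trace is a finite list of
parametric events. Θ_τ is the lub closure of the parameter instances occurring in τ. -/
def ThetaOf (τ : List (E × (X → Option V))) : Set (X → Option V) :=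
  lubClosure {θ | ∃ e : E, (e, θ) ∈ τ}

/-- The θ-trace traceSlice τ↾θ : keep (in order) the base events of τ whose parameter
instance is ⊑ θ, dropping the parameter instances. -/
noncomputable def traceSlice (τ : List (E × (X → Option V))) (θ : X → Option V) :
    List E :=
  (τ.filter fun p => @decide (PFle p.2 θ) (Classical.propDecidable _)).map Prod.fst

/-- The state of algorithm A⟨X⟩: the lookup table T (a partial map from parameter
instances to non-parametric traces) and the set Θ of parameter instances. -/
structure AState (X V E : Type*) where
  T : (X → Option V) → Option (List E)
  Th : Set (X → Option V)

/- One step of algorithm A⟨X⟩, processing the parametric event ev = e⟨θ⟩: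
for each θ' ∈ {θ} ⊔ Θ, set T(θ') to T(max (θ']_Θ)) followed by e;
then Θ becomes {⊥, θ} ⊔ Θ = Θ ∪ ({θ} ⊔ Θ). -/
open Classical in

noncomputable def Astep (s : AState X V E) (ev : E × (X → Option V)) :
    AState X V E where
  T := fun θ' =>
    if θ' ∈ joinOne ev.2 s.Th then (s.T (maxBelow s.Th θ')).map (· ++ [ev.1])
    else s.T θ'
  Th := s.Th ∪ joinOne ev.2 s.Th

/- The initial state of algorithm A⟨X⟩: T defined only on ⊥ with T(⊥) = ε,
and Θ = {⊥}. -/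
open Classical in
noncomputable def Ainit : AState X V E where
  T := fun θ' => if θ' = pbot then some [] else none
  Th := {pbot}

/-- Algorithm A⟨X⟩ run on a parametric trace, processing events first to last. -/
noncomputable def Arun (τ : List (E × (X → Option V))) : AState X V E :=
  τ.foldl Astep Ainit

section Aux

variable {X V E : Type*}

lemma pfle_refl (θ : X → Option V) : PFle θ θ := fun _ _ h => h

lemma pfle_trans {a b c : X → Option V} (h1 : PFle a b) (h2 : PFle b c) : PFle a c :=
  fun x v h => h2 x v (h1 x v h)

lemma pfle_antisymm {a b : X → Option V} (h1 : PFle a b) (h2 : PFle b a) : a = b := by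
  funext x
  cases ha : a x with
  | some v => exact (h1 x v ha).symm
  | none =>
    cases hb : b x with
    | some v => exact absurd (h2 x v hb) (by simp [ha])
    | none => rfl

lemma pbot_le (θ : X → Option V) : PFle pbot θ := fun x v h => by simp [pbot] at h

lemma isLubPF_empty : IsLubPF (∅ : Set (X → Option V)) pbot :=
  ⟨fun θ h => absurd h (Set.notMem_empty θ), fun θ'' _ => pbot_le θ''⟩

lemma isLubPF_pair_of_le {a b : X → Option V} (h : PFle a b) :
    IsLubPF {a, b} b := by
  constructor
  · intro θ hθ
    simp only [Set.mem_insert_iff, Set.mem_singleton_iff] at hθ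
    rcases hθ with rfl | rfl
    · exact h
    · exact pfle_refl _
  · intro z hz
    exact hz b (by simp)

lemma isLubPF_pair_bot (a : X → Option V) : IsLubPF {a, pbot} a := by
  constructor
  · intro θ hθ
    simp only [Set.mem_insert_iff, Set.mem_singleton_iff] at hθ
    rcases hθ with rfl | rfl
    · exact pfle_refl _
    · exact pbot_le _
  · intro z hz
    exact hz a (by simp)

/-- Existence of lubs for sets with an upper bound. -/
lemma exists_lub_of_ub {Θ : Set (X → Option V)} {u : X → Option V} (hu : IsUB Θ u) :
    ∃ w, IsLubPF Θ w ∧ PFle w u := by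
  classical
  refine ⟨fun x => if ∃ θ ∈ Θ, (θ x).isSome then u x else none, ⟨?_, ?_⟩, ?_⟩
  · intro θ hθ x v hx
    have hc : ∃ θ' ∈ Θ, (θ' x).isSome := ⟨θ, hθ, by simp [hx]⟩
    simp only [if_pos hc]
    exact hu θ hθ x v hx
  · intro z hz x v hx
    by_cases hc : ∃ θ' ∈ Θ, (θ' x).isSome
    · simp only [if_pos hc] at hx
      obtain ⟨θ', hθ', hsome⟩ := hc
      obtain ⟨v', hv'⟩ := Option.isSome_iff_exists.mp hsome
      have : u x = some v' := hu θ' hθ' x v' hv'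
      have hvv : v' = v := by rw [this] at hx; exact Option.some.inj hx
      exact hvv ▸ hz θ' hθ' x v' hv'
    · simp [if_neg hc] at hx
  · intro x v hx
    by_cases hc : ∃ θ' ∈ Θ, (θ' x).isSome
    · simpa [if_pos hc] using hx
    · simp [if_neg hc] at hx

lemma subset_lubClosure (Θ : Set (X → Option V)) : Θ ⊆ lubClosure Θ := by
  intro θ hθ S hS
  exact hS.1 hθ

lemma lubClosure_min {Θ S : Set (X → Option V)} (h1 : Θ ⊆ S) (h2 : LubClosed S) :
    lubClosure Θ ⊆ S := by
  intro θ hθ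
  exact hθ S ⟨h1, h2⟩

lemma lubClosed_lubClosure (Θ : Set (X → Option V)) : LubClosed (lubClosure Θ) := by
  intro Θ' hsub u hu S hS
  exact hS.2 Θ' (fun q hq => hsub hq S hS) u hu

lemma pbot_mem_lubClosure (Θ : Set (X → Option V)) : pbot ∈ lubClosure Θ :=
  lubClosed_lubClosure Θ ∅ (Set.empty_subset _) pbot isLubPF_empty

lemma lubClosure_mono {Θ₁ Θ₂ : Set (X → Option V)} (h : Θ₁ ⊆ Θ₂) :
    lubClosure Θ₁ ⊆ lubClosure Θ₂ :=
  lubClosure_min (h.trans (subset_lubClosure Θ₂)) (lubClosed_lubClosure Θ₂)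

lemma maxBelow_spec {Θ : Set (X → Option V)} (hc : LubClosed Θ) (θ : X → Option V) :
    maxBelow Θ θ ∈ below θ Θ ∧ ∀ q ∈ below θ Θ, PFle q (maxBelow Θ θ) := by
  apply Classical.epsilon_spec
    (p := fun m => m ∈ below θ Θ ∧ ∀ q ∈ below θ Θ, PFle q m)
  obtain ⟨w, hw, hwθ⟩ := exists_lub_of_ub (Θ := below θ Θ) (u := θ) (fun q hq => hq.2)
  exact ⟨w, ⟨hc _ (fun q hq => hq.1) w hw, hwθ⟩, fun q hq => hw.1 q hq⟩

end Aux
section Aux2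

variable {X V E : Type*}

lemma mem_joinOne_self {Θ : Set (X → Option V)} (hb : pbot ∈ Θ) (θ : X → Option V) :
    θ ∈ joinOne θ Θ :=
  ⟨pbot, hb, isLubPF_pair_bot θ⟩

lemma mem_joinOne_of_le {Θ : Set (X → Option V)} {θ θ' : X → Option V}
    (hθ' : θ' ∈ Θ) (h : PFle θ θ') : θ' ∈ joinOne θ Θ :=
  ⟨θ', hθ', isLubPF_pair_of_le h⟩

lemma le_of_mem_joinOne {Θ : Set (X → Option V)} {θ θ' : X → Option V}
    (h : θ' ∈ joinOne θ Θ) : PFle θ θ' := by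
  obtain ⟨θ'', _, hlub⟩ := h
  exact hlub.1 θ (by simp)

/-- The key step: updating Θ with {⊥,θ} ⊔ Θ preserves being a lub closure. -/
lemma step_Th {I : Set (X → Option V)} (θ : X → Option V) :
    lubClosure I ∪ joinOne θ (lubClosure I) = lubClosure (I ∪ {θ}) := by
  apply le_antisymm
  · rintro θ₁ (h | ⟨θ'', hθ'', hlub⟩)
    · exact lubClosure_mono Set.subset_union_left h
    · apply lubClosed_lubClosure (I ∪ {θ}) {θ, θ''} _ θ₁ hlub
      rintro q hq
      simp only [Set.mem_insert_iff, Set.mem_singleton_iff] at hq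
      rcases hq with rfl | rfl
      · exact subset_lubClosure _ (Set.mem_union_right _ rfl)
      · exact lubClosure_mono Set.subset_union_left hθ''
  · apply lubClosure_min
    · rintro q (hq | hq)
      · exact Set.mem_union_left _ (subset_lubClosure I hq)
      · rcases hq with rfl
        exact Set.mem_union_right _ (mem_joinOne_self (pbot_mem_lubClosure I) q)
    · -- LubClosed (lubClosure I ∪ joinOne θ (lubClosure I))
      intro Θ' hsub u hu
      by_cases hall : Θ' ⊆ lubClosure I
      · exact Set.mem_union_left _ (lubClosed_lubClosure I Θ' hall u hu)
      · -- some element of Θ' is in joinOne θ (lubClosure I) and witnesses θ ⊑ u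
        have hθu : PFle θ u := by
          obtain ⟨θ₁, hθ₁, hnot⟩ := Set.not_subset.mp hall
          have hθ₁j : θ₁ ∈ joinOne θ (lubClosure I) := (hsub hθ₁).resolve_left hnot
          exact pfle_trans (le_of_mem_joinOne hθ₁j) (hu.1 θ₁ hθ₁)
        set S : Set (X → Option V) := {q ∈ lubClosure I | PFle q u} with hS
        have hSub : IsUB S u := fun q hq => hq.2
        obtain ⟨w, hwlub, hwu⟩ := exists_lub_of_ub hSub
        have hwI : w ∈ lubClosure I :=
          lubClosed_lubClosure I S (fun q hq => hq.1) w hwlub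
        refine Set.mem_union_right _ ⟨w, hwI, ⟨?_, ?_⟩⟩
        · intro q hq
          simp only [Set.mem_insert_iff, Set.mem_singleton_iff] at hq
          rcases hq with rfl | rfl
          · exact hθu
          · exact hwu
        · intro z hz
          have hθz : PFle θ z := hz θ (by simp)
          have hwz : PFle w z := hz w (by simp)
          apply hu.2
          intro θ₂ hθ₂
          rcases hsub hθ₂ with h2 | ⟨θ''₂, hθ''₂, hlub₂⟩
          · -- θ₂ ∈ lubClosure I, θ₂ ⊑ u so θ₂ ∈ S ⊑ w ⊑ z
            exact pfle_trans (hwlub.1 θ₂ ⟨h2, hu.1 θ₂ hθ₂⟩) hwz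
          · -- θ₂ = lub {θ, θ''₂}
            have hθ''u : PFle θ''₂ u :=
              pfle_trans (hlub₂.1 θ''₂ (by simp)) (hu.1 θ₂ hθ₂)
            have hθ''w : PFle θ''₂ w := hwlub.1 θ''₂ ⟨hθ''₂, hθ''u⟩
            apply hlub₂.2
            intro q hq
            simp only [Set.mem_insert_iff, Set.mem_singleton_iff] at hq
            rcases hq with rfl | rfl
            · exact hθz
            · exact pfle_trans hθ''w hwz

open Classical in
lemma traceSlice_append (τ : List (E × (X → Option V))) (ev : E × (X → Option V))
    (θ : X → Option V) :
    traceSlice (τ ++ [ev]) θ =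
      traceSlice τ θ ++ if PFle ev.2 θ then [ev.1] else [] := by
  classical
  unfold traceSlice
  rw [List.filter_append, List.map_append]
  congr 1
  by_cases h : PFle ev.2 θ <;> simp [List.filter, h]

lemma slice_eq_of_max {Θ : Set (X → Option V)} {τ : List (E × (X → Option V))}
    (hI : ∀ p ∈ τ, p.2 ∈ Θ) {θ m : X → Option V}
    (hm1 : PFle m θ) (hm2 : ∀ q ∈ below θ Θ, PFle q m) :
    traceSlice τ θ = traceSlice τ m := by
  unfold traceSlice
  congr 1
  apply List.filter_congr
  intro p hp
  simp only [decide_eq_decide]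
  exact ⟨fun h => hm2 p.2 ⟨hI p hp, h⟩, fun h => pfle_trans h hm1⟩

end Aux2
section Main

variable {X V E : Type*}

lemma lubClosed_singleton_pbot : LubClosed ({pbot} : Set (X → Option V)) := by
  intro Θ' hsub u hu
  have hub : IsUB Θ' pbot := by
    intro q hq
    rcases hsub hq with rfl
    exact pfle_refl _
  exact Set.mem_singleton_iff.mpr (pfle_antisymm (hu.2 pbot hub) (pbot_le u))

lemma thetaOf_nil : ThetaOf ([] : List (E × (X → Option V))) = {pbot} := by
  apply le_antisymm
  · apply lubClosure_min
    · intro q hq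
      obtain ⟨e, he⟩ := hq
      simp at he
    · exact lubClosed_singleton_pbot
  · intro q hq
    rcases hq with rfl
    exact pbot_mem_lubClosure _

lemma instances_append (τ : List (E × (X → Option V))) (ev : E × (X → Option V)) :
    {θ | ∃ e : E, (e, θ) ∈ τ ++ [ev]} = {θ | ∃ e : E, (e, θ) ∈ τ} ∪ {ev.2} := by
  ext θ
  simp only [Set.mem_setOf_eq, List.mem_append, List.mem_singleton, Set.mem_union,
    Set.mem_singleton_iff, Prod.ext_iff]
  constructor
  · rintro ⟨e, he | ⟨he1, he2⟩⟩
    · exact Or.inl ⟨e, he⟩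
    · exact Or.inr he2
  · rintro (⟨e, he⟩ | rfl)
    · exact ⟨e, Or.inl he⟩
    · exact ⟨ev.1, Or.inr ⟨rfl, rfl⟩⟩

lemma arun_inv (τ : List (E × (X → Option V))) :
    (Arun τ : AState X V E).Th = ThetaOf τ ∧
    (∀ θ ∈ (Arun τ : AState X V E).Th, (Arun τ).T θ = some (traceSlice τ θ)) ∧
    (∀ θ ∉ (Arun τ : AState X V E).Th, (Arun τ).T θ = none) := by
  induction τ using List.reverseRecOn with
  | nil =>
    refine ⟨by simp [Arun, Ainit, thetaOf_nil], ?_, ?_⟩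
    · intro θ hθ
      rcases hθ with rfl
      simp [Arun, Ainit, traceSlice]
    · intro θ hθ
      have : θ ≠ pbot := fun h => hθ (h ▸ rfl)
      simp [Arun, Ainit, this]
  | append_singleton τ ev ih =>
    obtain ⟨ihTh, ihT, ihN⟩ := ih
    have hA : Arun (τ ++ [ev]) = Astep (Arun (X := X) (V := V) τ) ev := by
      simp [Arun, List.foldl_append]
    set s := Arun (X := X) (V := V) (E := E) τ with hs
    have hclosed : LubClosed s.Th := by
      rw [ihTh]; exact lubClosed_lubClosure _
    have hbot : pbot ∈ s.Th := by
      rw [ihTh]; exact pbot_mem_lubClosure _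
    have hinst : ∀ p ∈ τ, p.2 ∈ s.Th := by
      intro p hp
      rw [ihTh]
      exact subset_lubClosure _ ⟨p.1, hp⟩
    have hTh' : (Astep s ev).Th = ThetaOf (τ ++ [ev]) := by
      show s.Th ∪ joinOne ev.2 s.Th = _
      rw [ihTh]
      unfold ThetaOf
      rw [instances_append, ← step_Th]
    refine ⟨hA ▸ hTh', ?_, ?_⟩
    · intro θ hθ
      rw [hA] at hθ ⊢
      by_cases hj : θ ∈ joinOne ev.2 s.Th
      · have hle := le_of_mem_joinOne hj
        obtain ⟨hmB, hmax⟩ := maxBelow_spec hclosed θ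
        have hslice : traceSlice τ θ = traceSlice τ (maxBelow s.Th θ) :=
          slice_eq_of_max hinst hmB.2 hmax
        have heq : (Astep s ev).T θ = (s.T (maxBelow s.Th θ)).map (· ++ [ev.1]) := by
          simp only [Astep]; rw [if_pos hj]
        rw [heq, ihT _ hmB.1, traceSlice_append, if_pos hle, ← hslice]
        rfl
      · have hmem : θ ∈ s.Th := ((Set.mem_union _ _ _).mp hθ).resolve_right hj
        have hnle : ¬ PFle ev.2 θ := fun h => hj (mem_joinOne_of_le hmem h)
        have heq : (Astep s ev).T θ = s.T θ := by
          simp only [Astep]; rw [if_neg hj]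
        rw [heq, traceSlice_append, if_neg hnle, List.append_nil]
        exact ihT θ hmem
    · intro θ hθ
      rw [hA] at hθ ⊢
      have h1 : θ ∉ s.Th := fun h => hθ (Set.mem_union_left _ h)
      have h2 : θ ∉ joinOne ev.2 s.Th := fun h => hθ (Set.mem_union_right _ h)
      have heq : (Astep s ev).T θ = s.T θ := by
        simp only [Astep]; rw [if_neg h2]
      rw [heq]
      exact ihN θ h1

end Main
/-- Correctness of the trace slicing algorithm A⟨X⟩ (Theorem 1):
(1) Dom(A(τ).T) = A(τ).Θ = Θ_τ;
(2) A(τ).T(θ) = τ↾θ for every θ ∈ A(τ).Θ;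
(3) τ↾θ = A(τ).T(max (θ]_{A(τ).Θ}) for every parameter instance θ. -/
theorem stmt17 (τ : List (E × (X → Option V))) :
    ({θ | (Arun τ).T θ ≠ none} = (Arun τ).Th ∧ (Arun τ).Th = ThetaOf τ) ∧
    (∀ θ ∈ (Arun τ).Th, (Arun τ).T θ = some (traceSlice τ θ)) ∧
    (∀ θ : X → Option V,
      (Arun τ).T (maxBelow (Arun τ).Th θ) = some (traceSlice τ θ)) := by
  obtain ⟨hTh, hT, hN⟩ := arun_inv τ
  have hclosed : LubClosed (Arun (X := X) (V := V) (E := E) τ).Th := by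
    rw [hTh]; exact lubClosed_lubClosure _
  have hinst : ∀ p ∈ τ, p.2 ∈ (Arun (X := X) (V := V) (E := E) τ).Th := by
    intro p hp
    rw [hTh]
    exact subset_lubClosure _ ⟨p.1, hp⟩
  refine ⟨⟨?_, hTh⟩, hT, ?_⟩
  · ext θ
    simp only [Set.mem_setOf_eq]
    constructor
    · intro h
      by_contra hmem
      exact h (hN θ hmem)
    · intro h
      rw [hT θ h]
      simp
  · intro θ
    obtain ⟨hmB, hmax⟩ := maxBelow_spec hclosed θ
    rw [hT _ hmB.1, slice_eq_of_max hinst hmB.2 hmax]
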